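/- Let (A,B,C,D,E) = (1,87,15,39,21) and evaluate Δ and the linear forms of the context at this point. Define the ten rational numbers d₁ = −Δ·A·q₊C·q₋C, d₂ = −Δ·A·q₊D·q₋D, d₃ = −Δ·A·q₊E·q₋E, d₄ = Δ·q₊C·p₊0·p₋1, d₅ = Δ·q₊C·p₋0·p₊1, d₆ = Δ·q₊D·p₊0·p₋2, d₇ = Δ·q₊D·p₋0·p₊2, d₈ = Δ·q₊E·p₊0·p₋3, d₉ = Δ·q₊E·p₋0·p₊3, d₁₀ = −Δ·q₋C·p₊2·p₋3. Then the images of d₁,…,d₁₀ in ℚˣ/(ℚˣ)² are linearly independent over 𝔽₂; equivalently, the field L = ℚ(√d₁,…,√d₁₀) (inside ℂ) satisfies [L : ℚ] = 2¹⁰ and Gal(L/ℚ) ≅ (ℤ/2ℤ)¹⁰. (This is the field over which the 320 conics on the Heisenberg-invariant quartic K3 surface X_{[1:87:15:39:21]} are defined.) -/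

import Mathlib

namespace Stmt15

/-- The parameter point `(A,B,C,D,E) = (1,87,15,39,21)`. -/
def A : ℚ := 1
def B : ℚ := 87
def C : ℚ := 15
def D : ℚ := 39
def E : ℚ := 21

def Δ : ℚ := 16 * A ^ 3 + A * B ^ 2 - 4 * A * (C ^ 2 + D ^ 2 + E ^ 2) + 4 * C * D * E
def qpC : ℚ := 2 * A + C
def qmC : ℚ := 2 * A - C
def qpD : ℚ := 2 * A + D
def qmD : ℚ := 2 * A - D
def qpE : ℚ := 2 * A + E
def qmE : ℚ := 2 * A - E
def pp0 : ℚ := 4 * A + B + 2 * C + 2 * D + 2 * E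
def pm0 : ℚ := 4 * A - B + 2 * C + 2 * D + 2 * E
def pp1 : ℚ := 4 * A + B + 2 * C - 2 * D - 2 * E
def pm1 : ℚ := 4 * A - B + 2 * C - 2 * D - 2 * E
def pp2 : ℚ := 4 * A + B - 2 * C + 2 * D - 2 * E
def pm2 : ℚ := 4 * A - B - 2 * C + 2 * D - 2 * E
def pp3 : ℚ := 4 * A + B - 2 * C - 2 * D + 2 * E
def pm3 : ℚ := 4 * A - B - 2 * C - 2 * D + 2 * E

/-- The ten discriminants `d₁,…,d₁₀` over which the 320 conics on
`X_{[1:87:15:39:21]}` are defined. -/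
def d : Fin 10 → ℚ :=
  ![-(Δ * A * qpC * qmC), -(Δ * A * qpD * qmD), -(Δ * A * qpE * qmE),
    Δ * qpC * pp0 * pm1, Δ * qpC * pm0 * pp1,
    Δ * qpD * pp0 * pm2, Δ * qpD * pm0 * pp2,
    Δ * qpE * pp0 * pm3, Δ * qpE * pm0 * pp3,
    -(Δ * qmC * pp2 * pm3)]

/-- Integer values of the discriminants. -/
def nn : Fin 10 → ℤ :=
 ![10602917, 72781109, 20965949, -34005186037, 54645803, -36502676749,
   12783903443, -39624540139, 1848313925, -9014350553]

lemma d_eq (i : Fin 10) : d i = ((nn i : ℤ) : ℚ) := by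
  fin_cases i <;>
    norm_num [d, nn, A, B, C, D, E, Δ, qpC, qmC, qpD, qmD, qpE, qmE,
      pp0, pm0, pp1, pm1, pp2, pm2, pp3, pm3]

def res (p : ℕ) [NeZero p] (x : ℤ) : Prop := ∃ z : ZMod p, z ^ 2 = (x : ZMod p)

instance (p : ℕ) [NeZero p] (x : ℤ) : Decidable (res p x) := by unfold res; infer_instance

/-- The product of the selected integer discriminants. -/
def eE (b0 b1 b2 b3 b4 b5 b6 b7 b8 b9 : Bool) : ℤ :=
  (bif b0 then (10602917:ℤ) else 1) * ((bif b1 then (72781109:ℤ) else 1) *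
  ((bif b2 then (20965949:ℤ) else 1) * ((bif b3 then (-34005186037:ℤ) else 1) *
  ((bif b4 then (54645803:ℤ) else 1) * ((bif b5 then (-36502676749:ℤ) else 1) *
  ((bif b6 then (12783903443:ℤ) else 1) * ((bif b7 then (-39624540139:ℤ) else 1) *
  ((bif b8 then (1848313925:ℤ) else 1) * ((bif b9 then (-9014350553:ℤ) else 1) * 1)))))))))

set_option maxRecDepth 4000 in
theorem key : ∀ b0 b1 b2 b3 b4 b5 b6 b7 b8 b9 : Bool,
    (b0 || b1 || b2 || b3 || b4 || b5 || b6 || b7 || b8 || b9) = true →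
    ¬ (res 3 (eE b0 b1 b2 b3 b4 b5 b6 b7 b8 b9) ∧ res 29 (eE b0 b1 b2 b3 b4 b5 b6 b7 b8 b9) ∧
       res 31 (eE b0 b1 b2 b3 b4 b5 b6 b7 b8 b9) ∧ res 43 (eE b0 b1 b2 b3 b4 b5 b6 b7 b8 b9) ∧
       res 47 (eE b0 b1 b2 b3 b4 b5 b6 b7 b8 b9) ∧ res 53 (eE b0 b1 b2 b3 b4 b5 b6 b7 b8 b9) ∧
       res 59 (eE b0 b1 b2 b3 b4 b5 b6 b7 b8 b9) ∧ res 61 (eE b0 b1 b2 b3 b4 b5 b6 b7 b8 b9) ∧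
       res 11 (eE b0 b1 b2 b3 b4 b5 b6 b7 b8 b9) ∧ res 13 (eE b0 b1 b2 b3 b4 b5 b6 b7 b8 b9)) := by
  decide

lemma prod_eq_eE (s : Finset (Fin 10)) :
    ∏ i ∈ s, nn i = eE (decide ((0:Fin 10) ∈ s)) (decide ((1:Fin 10) ∈ s)) (decide ((2:Fin 10) ∈ s))
      (decide ((3:Fin 10) ∈ s)) (decide ((4:Fin 10) ∈ s)) (decide ((5:Fin 10) ∈ s))
      (decide ((6:Fin 10) ∈ s)) (decide ((7:Fin 10) ∈ s)) (decide ((8:Fin 10) ∈ s))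
      (decide ((9:Fin 10) ∈ s)) := by
  have h1 : ∏ i ∈ s, nn i = ∏ i : Fin 10, if i ∈ s then nn i else 1 := by
    rw [Finset.prod_ite_mem, Finset.univ_inter]
  have h2 : ∀ (g : Fin 10 → ℤ), ∏ i : Fin 10, g i
      = g 0 * (g 1 * (g 2 * (g 3 * (g 4 * (g 5 * (g 6 * (g 7 * (g 8 * (g 9 * 1))))))))) := by
    intro g
    have huniv : (Finset.univ : Finset (Fin 10)) = {0,1,2,3,4,5,6,7,8,9} := by decide
    rw [huniv, show ({0,1,2,3,4,5,6,7,8,9} : Finset (Fin 10)) = insert 0 {1,2,3,4,5,6,7,8,9} from rfl]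
    repeat rw [Finset.prod_insert (by decide)]
    rw [Finset.prod_singleton]; ring
  rw [h1, h2]
  simp only [eE, Bool.cond_decide]
  rw [show nn 0 = 10602917 from by decide, show nn 1 = 72781109 from by decide,
    show nn 2 = 20965949 from by decide, show nn 3 = -34005186037 from by decide,
    show nn 4 = 54645803 from by decide, show nn 5 = -36502676749 from by decide,
    show nn 6 = 12783903443 from by decide, show nn 7 = -39624540139 from by decide,
    show nn 8 = 1848313925 from by decide, show nn 9 = -9014350553 from by decide]

theorem part1 : ∀ s : Finset (Fin 10), s.Nonempty → ¬∃ r : ℚ, r ^ 2 = ∏ i ∈ s, d i := by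
  rintro s hs ⟨r, hr⟩
  have hprod : (∏ i ∈ s, d i) = ((∏ i ∈ s, nn i : ℤ) : ℚ) := by
    rw [Finset.prod_congr rfl fun i _ => d_eq i]; norm_cast
  rw [hprod] at hr
  obtain ⟨m, hm⟩ : ∃ m : ℤ, (m : ℚ) = r := by
    refine IsIntegrallyClosed.isIntegral_iff.mp
      ⟨Polynomial.X ^ 2 - Polynomial.C (∏ i ∈ s, nn i),
        Polynomial.monic_X_pow_sub_C _ (by norm_num), ?_⟩
    simp only [Polynomial.eval₂_sub, Polynomial.eval₂_pow, Polynomial.eval₂_X,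
      Polynomial.eval₂_C, hr]
    simp
  have hmz : m ^ 2 = ∏ i ∈ s, nn i := by
    have : (m : ℚ) ^ 2 = ((∏ i ∈ s, nn i : ℤ) : ℚ) := by rw [hm, hr]
    exact_mod_cast this
  have hres : ∀ (p : ℕ) [NeZero p], res p (∏ i ∈ s, nn i) := by
    intro p _
    exact ⟨(m : ZMod p), by rw [← hmz]; push_cast; ring⟩
  have hb : (decide ((0:Fin 10) ∈ s) || decide ((1:Fin 10) ∈ s) || decide ((2:Fin 10) ∈ s) ||
      decide ((3:Fin 10) ∈ s) || decide ((4:Fin 10) ∈ s) || decide ((5:Fin 10) ∈ s) ||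
      decide ((6:Fin 10) ∈ s) || decide ((7:Fin 10) ∈ s) || decide ((8:Fin 10) ∈ s) ||
      decide ((9:Fin 10) ∈ s)) = true := by
    obtain ⟨i, hi⟩ := hs
    simp only [Bool.or_eq_true, decide_eq_true_eq]
    fin_cases i
    exacts [.inl (.inl (.inl (.inl (.inl (.inl (.inl (.inl (.inl hi)))))))),
      .inl (.inl (.inl (.inl (.inl (.inl (.inl (.inl (.inr hi)))))))),
      .inl (.inl (.inl (.inl (.inl (.inl (.inl (.inr hi))))))),
      .inl (.inl (.inl (.inl (.inl (.inl (.inr hi)))))),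
      .inl (.inl (.inl (.inl (.inl (.inr hi))))),
      .inl (.inl (.inl (.inl (.inr hi)))),
      .inl (.inl (.inl (.inr hi))),
      .inl (.inl (.inr hi)),
      .inl (.inr hi),
      .inr hi]
  refine key _ _ _ _ _ _ _ _ _ _ hb ?_
  rw [← prod_eq_eE]
  exact ⟨hres 3, hres 29, hres 31, hres 43, hres 47, hres 53, hres 59, hres 61, hres 11, hres 13⟩


open IntermediateField Polynomial

/-- Decomposition of elements of a quadratic extension `F(α)` with `α² ∈ F`, `α ∉ F`. -/
lemma quad_decomp (F : IntermediateField ℚ ℂ) (α : ℂ) (hα2 : α ^ 2 ∈ F) (hα : α ∉ F)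
    {x : ℂ} (hx : x ∈ IntermediateField.adjoin F {α}) :
    ∃ a b : ℂ, a ∈ F ∧ b ∈ F ∧ x = a + b * α := by
  induction hx using IntermediateField.adjoin_induction with
  | mem y hy =>
    rcases hy with rfl
    exact ⟨0, 1, zero_mem F, one_mem F, by ring⟩
  | algebraMap y => exact ⟨y, 0, y.2, zero_mem F, by simp [IntermediateField.algebraMap_apply]⟩
  | add y z _ _ hy hz =>
    obtain ⟨a, b, ha, hb, rfl⟩ := hy
    obtain ⟨c, e, hc, he, rfl⟩ := hz
    exact ⟨a + c, b + e, add_mem ha hc, add_mem hb he, by ring⟩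
  | mul y z _ _ hy hz =>
    obtain ⟨a, b, ha, hb, rfl⟩ := hy
    obtain ⟨c, e, hc, he, rfl⟩ := hz
    exact ⟨a * c + b * e * α ^ 2, a * e + b * c,
      add_mem (mul_mem ha hc) (mul_mem (mul_mem hb he) hα2),
      add_mem (mul_mem ha he) (mul_mem hb hc), by ring⟩
  | inv y _ hy =>
    obtain ⟨a, b, ha, hb, rfl⟩ := hy
    by_cases hy0 : a + b * α = 0
    · exact ⟨0, 0, zero_mem F, zero_mem F, by rw [hy0]; simp⟩
    have hN : a * a - b * b * α ^ 2 ≠ 0 := by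
      intro h0
      have : (a + b * α) * (a - b * α) = 0 := by rw [← h0]; ring
      rcases mul_eq_zero.mp this with h | h
      · exact hy0 h
      · by_cases hb0 : b = 0
        · apply hy0; rw [hb0] at h ⊢; simpa using h
        · apply hα
          have : α = a / b := by field_simp at h ⊢; linear_combination -h
          rw [this]
          exact div_mem ha hb
    refine ⟨a / (a * a - b * b * α ^ 2), -(b / (a * a - b * b * α ^ 2)),
      div_mem ha (sub_mem (mul_mem ha ha) (mul_mem (mul_mem hb hb) hα2)),
      neg_mem (div_mem hb (sub_mem (mul_mem ha ha) (mul_mem (mul_mem hb hb) hα2))), ?_⟩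
    apply inv_eq_of_mul_eq_one_right
    field_simp
    rw [div_eq_one_iff_eq (by rw [pow_two a, pow_two b]; exact hN)]; ring



namespace P2

open Stmt15 IntermediateField Polynomial Module

lemma ratmem (F : IntermediateField ℚ ℂ) (q : ℚ) : (q : ℂ) ∈ F := by
  rw [← eq_ratCast (algebraMap ℚ ℂ) q]; exact F.algebraMap_mem q

lemma quad_int (F : IntermediateField ℚ ℂ) (α : ℂ) (hα2 : α ^ 2 ∈ F) : IsIntegral F α := by
  refine ⟨X ^ 2 - Polynomial.C (⟨α ^ 2, hα2⟩ : F), monic_X_pow_sub_C _ two_ne_zero, ?_⟩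
  simp [Polynomial.eval₂_sub, Polynomial.eval₂_pow]

lemma quad_finrank (F : IntermediateField ℚ ℂ) (α : ℂ) (hα2 : α ^ 2 ∈ F) (hα : α ∉ F) :
    Module.finrank F (IntermediateField.adjoin F {α}) = 2 := by
  rw [IntermediateField.adjoin.finrank (quad_int F α hα2)]
  have hle : (minpoly F α).natDegree ≤ 2 := by
    have h1 := minpoly.min F α (monic_X_pow_sub_C (⟨α ^ 2, hα2⟩ : F) two_ne_zero)
      (by simp [Polynomial.eval₂_sub, Polynomial.eval₂_pow])
    have h2 : (X ^ 2 - Polynomial.C (⟨α ^ 2, hα2⟩ : F)).degree = 2 :=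
      Polynomial.degree_X_pow_sub_C (by norm_num) _
    rw [h2] at h1
    exact_mod_cast Polynomial.natDegree_le_iff_degree_le.mpr h1
  have hge : 2 ≤ (minpoly F α).natDegree := by
    rw [minpoly.two_le_natDegree_iff (quad_int F α hα2)]
    rintro ⟨y, hy⟩
    exact hα (hy ▸ y.2)
  omega

noncomputable def r (i : Fin 10) : ℂ :=
  (IsAlgClosed.exists_pow_nat_eq (d i : ℂ) (n := 2) (by norm_num)).choose

lemma r_sq (i : Fin 10) : r i ^ 2 = (d i : ℂ) :=
  (IsAlgClosed.exists_pow_nat_eq (d i : ℂ) (n := 2) (by norm_num)).choose_spec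

def SS (k : ℕ) : Set ℂ := r '' {i : Fin 10 | (i : ℕ) < k}

noncomputable def KK (k : ℕ) : IntermediateField ℚ ℂ := IntermediateField.adjoin ℚ (SS k)

lemma SS_succ (k : ℕ) (hk : k < 10) : SS (k + 1) = SS k ∪ {r ⟨k, hk⟩} := by
  have h : {i : Fin 10 | (i : ℕ) < k + 1} = {i : Fin 10 | (i : ℕ) < k} ∪ {⟨k, hk⟩} := by
    ext i
    simp [Nat.lt_succ_iff_lt_or_eq, Fin.ext_iff]
    omega
  rw [SS, h, Set.image_union, Set.image_singleton]; rfl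

lemma KK_succ (k : ℕ) (hk : k < 10) :
    KK (k + 1) = (IntermediateField.adjoin (KK k) {r ⟨k, hk⟩}).restrictScalars ℚ := by
  rw [KK, SS_succ k hk, ← adjoin_adjoin_left]; rfl

lemma hd0 (i : Fin 10) : d i ≠ 0 := by
  intro h
  exact part1 {i} ⟨i, Finset.mem_singleton_self i⟩ ⟨0, by simp [h]⟩

def P (k : ℕ) : Prop :=
  ∀ x : ℂ, x ∈ KK k → (∃ q : ℚ, x ^ 2 = (q : ℂ)) →
    ∃ (c : ℚ) (s : Finset (Fin 10)), (∀ i ∈ s, (i : ℕ) < k) ∧ x = (c : ℂ) * ∏ i ∈ s, r i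

lemma r_not_mem (k : ℕ) (hk : k < 10) (hP : P k) : r ⟨k, hk⟩ ∉ KK k := by
  intro hmem
  obtain ⟨c, s, hsb, hcs⟩ := hP _ hmem ⟨d ⟨k, hk⟩, r_sq _⟩
  have hknotin : (⟨k, hk⟩ : Fin 10) ∉ s := fun h => lt_irrefl k (hsb _ h)
  have hdk : d ⟨k, hk⟩ = c ^ 2 * ∏ i ∈ s, d i := by
    have : (d ⟨k, hk⟩ : ℂ) = ((c ^ 2 * ∏ i ∈ s, d i : ℚ) : ℂ) := by
      rw [← r_sq ⟨k, hk⟩, hcs, mul_pow, ← Finset.prod_pow,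
        Finset.prod_congr rfl fun i _ => r_sq i]
      push_cast
      ring
    exact_mod_cast this
  refine part1 (insert ⟨k, hk⟩ s) ⟨_, Finset.mem_insert_self _ _⟩
    ⟨c * ∏ i ∈ s, d i, ?_⟩
  rw [Finset.prod_insert hknotin, hdk]; ring

lemma main_ind : ∀ k, k ≤ 10 →
    FiniteDimensional ℚ (KK k) ∧ Module.finrank ℚ (KK k) = 2 ^ k ∧ P k := by
  intro k
  induction k with
  | zero =>
    intro _
    have hS : SS 0 = ∅ := by simp [SS]
    have hK : KK 0 = ⊥ := by rw [KK, hS, IntermediateField.adjoin_empty]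
    rw [hK]
    refine ⟨inferInstance, IntermediateField.finrank_bot, ?_⟩
    intro x hx _
    rw [hK, IntermediateField.mem_bot] at hx
    obtain ⟨q, rfl⟩ := hx
    exact ⟨q, ∅, by simp, by simp [eq_ratCast (algebraMap ℚ ℂ) q]⟩
  | succ k ih =>
    intro hk10
    have hk : k < 10 := hk10
    obtain ⟨hfin, hrank, hP⟩ := ih (le_of_lt hk10)
    haveI := hfin
    set α := r ⟨k, hk⟩ with hα_def
    have hα2 : α ^ 2 ∈ KK k := by rw [r_sq]; exact ratmem _ _
    have hα : α ∉ KK k := r_not_mem k hk hP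
    have hfin2 : FiniteDimensional (KK k) (IntermediateField.adjoin (KK k) {α}) :=
      IntermediateField.adjoin.finiteDimensional (quad_int _ _ hα2)
    have hfr2 : Module.finrank (KK k) (IntermediateField.adjoin (KK k) {α}) = 2 :=
      quad_finrank _ _ hα2 hα
    have hKs := KK_succ k hk
    have hfinQ : FiniteDimensional ℚ (IntermediateField.adjoin (KK k) {α}) :=
      FiniteDimensional.trans ℚ (KK k) _
    refine ⟨?_, ?_, ?_⟩
    · rw [hKs]; exact hfinQ
    · rw [hKs]
      have := Module.finrank_mul_finrank ℚ (KK k) (IntermediateField.adjoin (KK k) {α})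
      rw [hrank, hfr2] at this
      calc Module.finrank ℚ ((IntermediateField.adjoin (KK k) {α}).restrictScalars ℚ)
          = Module.finrank ℚ (IntermediateField.adjoin (KK k) {α}) := rfl
        _ = 2 ^ (k + 1) := by rw [← this]; ring
    · intro x hx hq
      rw [hKs, IntermediateField.mem_restrictScalars] at hx
      obtain ⟨a, b, ha, hb, rfl⟩ := quad_decomp (KK k) α hα2 hα hx
      obtain ⟨q, hq⟩ := hq
      have hab : a * b = 0 := by
        by_contra hab
        apply hα
        have h2ab : (2 : ℂ) * a * b ≠ 0 := by
          simp only [mul_ne_zero_iff] at hab ⊢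
          exact ⟨⟨two_ne_zero, hab.1⟩, hab.2⟩
        have hexp : (2 * a * b) * α = (q : ℂ) - a ^ 2 - b ^ 2 * α ^ 2 := by
          linear_combination hq
        have : α = ((q : ℂ) - a ^ 2 - b ^ 2 * α ^ 2) / (2 * a * b) := by
          rw [eq_div_iff h2ab]; linear_combination hexp
        rw [this]
        exact div_mem (sub_mem (sub_mem (ratmem _ q) (by exact pow_mem ha 2))
            (mul_mem (pow_mem hb 2) hα2))
          (mul_mem (mul_mem (by exact_mod_cast ratmem (KK k) 2) ha) hb)
      rcases mul_eq_zero.mp hab with h0 | h0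
      · -- a = 0 : x = b * α
        have hxb : a + b * α = b * α := by rw [h0]; ring
        have hb2 : b ^ 2 = ((q / d ⟨k, hk⟩ : ℚ) : ℂ) := by
          rw [hxb, mul_pow, r_sq] at hq
          have hdC : ((d ⟨k, hk⟩ : ℚ) : ℂ) ≠ 0 := by
            exact_mod_cast (Rat.cast_injective (α := ℂ)).ne (hd0 ⟨k, hk⟩)
          push_cast
          rw [eq_div_iff hdC]
          exact hq
        obtain ⟨c, s, hsb, hcs⟩ := hP b hb ⟨q / d ⟨k, hk⟩, hb2⟩
        have hknotin : (⟨k, hk⟩ : Fin 10) ∉ s := fun h => lt_irrefl k (hsb _ h)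
        refine ⟨c, insert ⟨k, hk⟩ s, ?_, ?_⟩
        · intro i hi
          rcases Finset.mem_insert.mp hi with rfl | hi
          · exact Nat.lt_succ_self k
          · exact Nat.lt_succ_of_lt (hsb i hi)
        · rw [hxb, hcs, Finset.prod_insert hknotin]; ring
      · -- b = 0 : x = a
        have hxa : a + b * α = a := by rw [h0]; ring
        obtain ⟨c, s, hsb, hcs⟩ := hP a ha ⟨q, by rw [← hxa]; exact hq⟩
        exact ⟨c, s, fun i hi => Nat.lt_succ_of_lt (hsb i hi), by rw [hxa, hcs]⟩

end P2

namespace P3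
open Stmt15 IntermediateField Polynomial P2

def T : Set ℂ := {z : ℂ | ∃ i : Fin 10, z ^ 2 = (d i : ℂ)}

lemma r_mem_KK10 (i : Fin 10) : r i ∈ KK 10 :=
  IntermediateField.subset_adjoin _ _ ⟨i, i.isLt, rfl⟩

lemma adjoinT_eq : IntermediateField.adjoin ℚ T = KK 10 := by
  apply le_antisymm
  · rw [adjoin_le_iff]
    rintro z ⟨i, hz⟩
    have hzz : (z - r i) * (z + r i) = 0 := by linear_combination hz - r_sq i
    rcases mul_eq_zero.mp hzz with h | h
    · rw [sub_eq_zero] at h; rw [h]; exact r_mem_KK10 i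
    · rw [eq_neg_of_add_eq_zero_left h]; exact neg_mem (r_mem_KK10 i)
  · rw [KK, adjoin_le_iff]
    rintro _ ⟨i, -, rfl⟩
    exact IntermediateField.subset_adjoin _ _ ⟨i, r_sq i⟩

noncomputable def f : Polynomial ℚ := ∏ i : Fin 10, (X ^ 2 - Polynomial.C (d i))

lemma f_monic : f.Monic :=
  monic_prod_of_monic _ _ fun i _ => monic_X_pow_sub_C _ two_ne_zero

lemma f_rootSet : f.rootSet ℂ = T := by
  ext z
  rw [Polynomial.mem_rootSet]
  have haev : (Polynomial.aeval z) f = ∏ i : Fin 10, (z ^ 2 - (d i : ℂ)) := by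
    simp [f, map_prod]
  constructor
  · rintro ⟨-, h⟩
    rw [haev, Finset.prod_eq_zero_iff] at h
    obtain ⟨i, -, hi⟩ := h
    exact ⟨i, by linear_combination hi⟩
  · rintro ⟨i, hi⟩
    refine ⟨f_monic.ne_zero, ?_⟩
    rw [haev, Finset.prod_eq_zero_iff]
    exact ⟨i, Finset.mem_univ i, by linear_combination hi⟩

lemma elem_ab_group (G : Type*) [Group G] [Fintype G]
    (hcard : Fintype.card G = 2 ^ 10) (hsq : ∀ σ : G, σ * σ = 1) :
    Nonempty (G ≃* (Fin 10 → Multiplicative (ZMod 2))) := by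
  have hcomm : ∀ a b : G, a * b = b * a := by
    intro a b
    have hinv : ∀ x : G, x⁻¹ = x := fun x => inv_eq_of_mul_eq_one_right (hsq x)
    calc a * b = (a * b)⁻¹ := (hinv _).symm
      _ = b⁻¹ * a⁻¹ := mul_inv_rev a b
      _ = b * a := by rw [hinv, hinv]
  letI : CommGroup G := { (inferInstance : Group G) with mul_comm := hcomm }
  letI : Module (ZMod 2) (Additive G) := AddCommGroup.zmodModule (by
    intro x
    show (2 : ℕ) • x = 0
    rw [two_nsmul]
    exact congrArg Additive.ofMul (hsq (Additive.toMul x)))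
  haveI : Module.Finite (ZMod 2) (Additive G) := Module.Finite.of_finite
  have hfr : Module.finrank (ZMod 2) (Additive G) = 10 := by
    have h := Module.card_eq_pow_finrank (K := ZMod 2) (V := Additive G)
    rw [ZMod.card] at h
    have h2 : (2:ℕ) ^ 10 = 2 ^ Module.finrank (ZMod 2) (Additive G) := by
      rw [← h, ← hcard]
      exact Fintype.card_congr (Additive.toMul (α := G)) |>.symm
    exact (Nat.pow_right_injective le_rfl h2).symm
  let b := Module.finBasisOfFinrankEq (ZMod 2) (Additive G) hfr
  let e : Additive G ≃ₗ[ZMod 2] (Fin 10 → ZMod 2) := b.equivFun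
  exact ⟨(MulEquiv.multiplicativeAdditive G).symm.trans
    ((AddEquiv.toMultiplicative e.toAddEquiv).trans (MulEquiv.piMultiplicative fun _ => ZMod 2))⟩

theorem part2 (L : IntermediateField ℚ ℂ)
    (hL : L = IntermediateField.adjoin ℚ T) :
    Module.finrank ℚ L = 2 ^ 10 ∧
      Nonempty ((L ≃ₐ[ℚ] L) ≃* (Fin 10 → Multiplicative (ZMod 2))) := by
  subst hL
  obtain ⟨hfin, hrank, -⟩ := main_ind 10 le_rfl
  rw [adjoinT_eq]
  haveI := hfin
  refine ⟨hrank, ?_⟩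
  haveI : IsSplittingField ℚ (KK 10) f := by
    have h := IntermediateField.adjoin_rootSet_isSplittingField (K := ℚ) (L := ℂ)
      (p := f) (IsAlgClosed.splits _)
    rwa [f_rootSet, adjoinT_eq] at h
  haveI : Normal ℚ (KK 10) := Normal.of_isSplittingField f
  haveI : IsGalois ℚ (KK 10) := ⟨⟩
  have hcard : Fintype.card ((KK 10) ≃ₐ[ℚ] (KK 10)) = 2 ^ 10 := by
    rw [← Nat.card_eq_fintype_card, IsGalois.card_aut_eq_finrank, hrank]
  set ρ : Fin 10 → KK 10 := fun i => ⟨r i, r_mem_KK10 i⟩ with hρ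
  have hgen : IntermediateField.adjoin ℚ (Set.range ρ) = (⊤ : IntermediateField ℚ (KK 10)) := by
    apply IntermediateField.map_injective (KK 10).val
    erw [IntermediateField.adjoin_map]
    have h1 : (KK 10).val '' Set.range ρ = SS 10 := by
      ext z
      constructor
      · rintro ⟨-, ⟨i, rfl⟩, rfl⟩; exact ⟨i, i.isLt, rfl⟩
      · rintro ⟨i, -, rfl⟩; exact ⟨ρ i, ⟨i, rfl⟩, rfl⟩
    have h2 : IntermediateField.map (KK 10).val ⊤ = KK 10 := by
      ext z
      constructor
      · rintro ⟨y, -, rfl⟩; exact y.2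
      · intro hz; exact ⟨⟨z, hz⟩, trivial, rfl⟩
    rw [h1]; erw [h2]; rfl
  have hfix : ∀ (σ : (KK 10) ≃ₐ[ℚ] (KK 10)) (x : KK 10), σ (σ x) = x := by
    intro σ x
    have hx : x ∈ IntermediateField.adjoin ℚ (Set.range ρ) := by rw [hgen]; trivial
    induction hx using IntermediateField.adjoin_induction with
    | mem y hy =>
      obtain ⟨i, rfl⟩ := hy
      have h1 : (ρ i) ^ 2 = algebraMap ℚ (KK 10) (d i) := by
        apply Subtype.ext
        have hc : ((ρ i ^ 2 : KK 10) : ℂ) = r i ^ 2 := by push_cast; rfl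
        have hc2 : ((algebraMap ℚ (KK 10) (d i) : KK 10) : ℂ) = ((d i : ℚ) : ℂ) := by
          have ht := IsScalarTower.algebraMap_apply ℚ (KK 10) ℂ (d i)
          rw [show (((algebraMap ℚ (KK 10)) (d i) : KK 10) : ℂ)
              = (algebraMap (KK 10) ℂ) ((algebraMap ℚ (KK 10)) (d i)) from rfl, ← ht, eq_ratCast]
        rw [hc, hc2, r_sq]
      have hsq2 : (σ (ρ i)) ^ 2 = (ρ i) ^ 2 := by
        calc (σ (ρ i)) ^ 2 = σ ((ρ i) ^ 2) := (map_pow σ (ρ i) 2).symm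
          _ = (ρ i) ^ 2 := by rw [h1, AlgEquiv.commutes]
      have hzz : (σ (ρ i) - ρ i) * (σ (ρ i) + ρ i) = 0 := by linear_combination hsq2
      rcases mul_eq_zero.mp hzz with h | h
      · rw [sub_eq_zero] at h; rw [h, h]
      · have h' : σ (ρ i) = -ρ i := eq_neg_of_add_eq_zero_left h
        rw [h', map_neg, h', neg_neg]
    | algebraMap y => rw [AlgEquiv.commutes, AlgEquiv.commutes]
    | add x y _ _ hx hy => rw [map_add, map_add, hx, hy]
    | mul x y _ _ hx hy => rw [map_mul, map_mul, hx, hy]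
    | inv x _ hx => rw [map_inv₀, map_inv₀, hx]
  have hsq1 : ∀ σ : (KK 10) ≃ₐ[ℚ] (KK 10), σ * σ = 1 := fun σ =>
    AlgEquiv.ext fun x => by rw [AlgEquiv.mul_apply, hfix σ x]; rfl
  exact elem_ab_group _ hcard hsq1

end P3

/-- The images of `d₁,…,d₁₀` in `ℚˣ/(ℚˣ)²` are linearly independent over `𝔽₂`:
no nonempty product of distinct `dᵢ`'s is a rational square. Equivalently, the
field `L = ℚ(√d₁,…,√d₁₀) ⊂ ℂ` satisfies `[L : ℚ] = 2¹⁰` and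
`Gal(L/ℚ) ≅ (ℤ/2ℤ)¹⁰`. -/
theorem stmt15 :
    (∀ s : Finset (Fin 10), s.Nonempty → ¬∃ r : ℚ, r ^ 2 = ∏ i ∈ s, d i) ∧
    (∀ L : IntermediateField ℚ ℂ,
      L = IntermediateField.adjoin ℚ {z : ℂ | ∃ i : Fin 10, z ^ 2 = (d i : ℂ)} →
      Module.finrank ℚ L = 2 ^ 10 ∧
        Nonempty ((L ≃ₐ[ℚ] L) ≃* (Fin 10 → Multiplicative (ZMod 2)))) := by
  refine ⟨part1, ?_⟩
  intro L hL
  exact P3.part2 L hL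

end Stmt15
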